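/- For r ≥ 1, n ≥ 0 and 0 ≤ k ≤ n: ⟨n,k⟩_(r,1) = A(n+r, k; r)/r!, i.e. r! · ⟨n,k⟩_(r,1) = A(n+r, k; r), where ⟨n,k⟩_(s,t) is defined by ⟨n,k⟩_(s,t) = (k+s)⟨n-1,k⟩_(s,t) + (n-k+t)⟨n-1,k-1⟩_(s,t) + δ_{k0}δ_{n0} (zero for negative indices), and A(m,k;r) counts permutations of S_m with exactly k r-descents. -/

import Mathlib

open Finset

def pval {n : ℕ} (σ : Equiv.Perm (Fin n)) (i : ℕ) : ℕ :=
  if h : i < n then (σ ⟨i, h⟩ : ℕ) else 0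

def desSet {n : ℕ} (σ : Equiv.Perm (Fin n)) : Finset ℕ :=
  (Finset.range (n - 1)).filter (fun i => pval σ (i + 1) < pval σ i)

def des {n : ℕ} (σ : Equiv.Perm (Fin n)) : ℕ := (desSet σ).card

def maj {n : ℕ} (σ : Equiv.Perm (Fin n)) : ℕ := ∑ i ∈ desSet σ, (i + 1)

def lrmin {n : ℕ} (σ : Equiv.Perm (Fin n)) : ℕ :=
  ((Finset.range n).filter (fun i => ∀ j ∈ Finset.range i, pval σ i < pval σ j)).card

def rlmin {n : ℕ} (σ : Equiv.Perm (Fin n)) : ℕ :=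
  ((Finset.range n).filter
    (fun i => ∀ j ∈ Finset.range n, i < j → pval σ i < pval σ j)).card

def stE (s t : ℕ) : ℕ → ℕ → ℕ
  | 0, k => if k = 0 then 1 else 0
  | n + 1, 0 => s * stE s t n 0
  | n + 1, k + 1 => (k + 1 + s) * stE s t n (k + 1) + (n - k + t) * stE s t n k

def rdesSet {m : ℕ} (r : ℕ) (σ : Equiv.Perm (Fin m)) : Finset ℕ :=
  (Finset.range (m - 1)).filter (fun i => pval σ (i + 1) + r ≤ pval σ i)

def rdes {m : ℕ} (r : ℕ) (σ : Equiv.Perm (Fin m)) : ℕ := (rdesSet r σ).card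

def rEulerian (m k r : ℕ) : ℕ :=
  ((Finset.univ : Finset (Equiv.Perm (Fin m))).filter (fun σ => rdes r σ = k)).card

def ins {m : ℕ} (τ : Equiv.Perm (Fin m)) (p : Fin (m+1)) : Equiv.Perm (Fin (m+1)) :=
  (finSuccEquiv' p).trans ((Equiv.optionCongr τ).trans (finSuccEquiv' (Fin.last m)).symm)

lemma pval_lt {m : ℕ} (τ : Equiv.Perm (Fin m)) {i : ℕ} (hi : i < m) : pval τ i < m := by
  rw [pval, dif_pos hi]; exact (τ ⟨i, hi⟩).isLt

lemma pval_ins_self {m : ℕ} (τ : Equiv.Perm (Fin m)) (p : Fin (m+1)) :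
    pval (ins τ p) ↑p = m := by
  rw [pval, dif_pos p.isLt]
  have : (⟨↑p, p.isLt⟩ : Fin (m+1)) = p := rfl
  rw [this]
  show ((finSuccEquiv' (Fin.last m)).symm (Option.map τ (finSuccEquiv' p p)) : ℕ) = m
  rw [finSuccEquiv'_at]
  simp [finSuccEquiv'_symm_none]

lemma pval_ins_lt {m : ℕ} (τ : Equiv.Perm (Fin m)) (p : Fin (m+1)) {i : ℕ} (h : i < ↑p) :
    pval (ins τ p) i = pval τ i := by
  have him : i < m := lt_of_lt_of_le h (Nat.lt_succ_iff.mp p.isLt)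
  have hi1 : i < m + 1 := Nat.lt_succ_of_lt him
  rw [pval, dif_pos hi1, pval, dif_pos him]
  have : (⟨i, hi1⟩ : Fin (m+1)) = Fin.castSucc ⟨i, him⟩ := rfl
  rw [this]
  show ((finSuccEquiv' (Fin.last m)).symm (Option.map τ (finSuccEquiv' p (Fin.castSucc ⟨i, him⟩))) : ℕ) = _
  rw [finSuccEquiv'_below (show Fin.castSucc ⟨i, him⟩ < p from h)]
  simp [finSuccEquiv'_symm_some_below (Fin.castSucc_lt_last _)]

lemma pval_ins_gt {m : ℕ} (τ : Equiv.Perm (Fin m)) (p : Fin (m+1)) {i : ℕ} (h : ↑p < i)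
    (hi : i ≤ m) : pval (ins τ p) i = pval τ (i - 1) := by
  have hi1 : i < m + 1 := Nat.lt_succ_of_le hi
  have h1 : 1 ≤ i := Nat.one_le_iff_ne_zero.mpr (by omega)
  have him : i - 1 < m := by omega
  rw [pval, dif_pos hi1, pval, dif_pos him]
  have : (⟨i, hi1⟩ : Fin (m+1)) = Fin.succ ⟨i - 1, him⟩ := by
    ext; simp; omega
  rw [this]
  show ((finSuccEquiv' (Fin.last m)).symm (Option.map τ (finSuccEquiv' p (Fin.succ ⟨i - 1, him⟩))) : ℕ) = _
  rw [finSuccEquiv'_above (by simp [Fin.le_def]; omega)]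
  simp [finSuccEquiv'_symm_some_below (Fin.castSucc_lt_last _)]

lemma rdesSet_ins {m r : ℕ} (hr : 1 ≤ r) (τ : Equiv.Perm (Fin m)) (p : Fin (m+1)) :
    rdesSet r (ins τ p) =
      ((rdesSet r τ).filter (fun i => i + 1 ≠ (p : ℕ))).image (fun i => if i < (p : ℕ) then i else i + 1)
      ∪ (if (p : ℕ) < m ∧ pval τ (p : ℕ) + r ≤ m then {(p : ℕ)} else ∅) := by
  have hP : (p : ℕ) ≤ m := Nat.lt_succ_iff.mp p.isLt
  ext i
  simp only [rdesSet, mem_union, mem_image, mem_filter, mem_range]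
  constructor
  · rintro ⟨hi, hd⟩
    have him : i < m := by omega
    rcases lt_trichotomy i (p : ℕ) with hlt | heq | hgt
    · -- i < p
      rw [pval_ins_lt τ p hlt] at hd
      by_cases h1 : i + 1 = (p : ℕ)
      · -- impossible: pval σ' (i+1) = m
        have h2 := pval_ins_self τ p
        rw [← h1] at h2
        rw [h2] at hd
        have := pval_lt τ him
        omega
      · have h1lt : i + 1 < (p : ℕ) := by omega
        rw [pval_ins_lt τ p h1lt] at hd
        left
        exact ⟨i, ⟨⟨by omega, hd⟩, h1⟩, if_pos hlt⟩
    · -- i = p : new descent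
      right
      rw [heq] at hd
      rw [pval_ins_self τ p] at hd
      have h2 : pval (ins τ p) ((p:ℕ) + 1) = pval τ (p : ℕ) := by
        rw [pval_ins_gt τ p (by omega) (by omega)]; simp
      rw [h2] at hd
      rw [if_pos ⟨by omega, hd⟩]
      simp [heq]
    · -- i > p
      rw [pval_ins_gt τ p hgt (le_of_lt him)] at hd
      rw [pval_ins_gt τ p (by omega) (by omega)] at hd
      have : i + 1 - 1 = (i - 1) + 1 := by omega
      rw [this] at hd
      left
      exact ⟨i - 1, ⟨⟨by omega, hd⟩, by omega⟩, by rw [if_neg (by omega)]; omega⟩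
  · rintro (⟨j, ⟨⟨hj, hd⟩, hne⟩, rfl⟩ | hnew)
    · by_cases hlt : j < (p : ℕ)
      · rw [if_pos hlt]
        have h1lt : j + 1 < (p : ℕ) := by omega
        refine ⟨by omega, ?_⟩
        rw [pval_ins_lt τ p hlt, pval_ins_lt τ p h1lt]
        exact hd
      · rw [if_neg hlt]
        refine ⟨by omega, ?_⟩
        rw [pval_ins_gt τ p (by omega) (by omega), pval_ins_gt τ p (by omega) (by omega)]
        simpa using hd
    · rcases Decidable.em ((p:ℕ) < m ∧ pval τ (p : ℕ) + r ≤ m) with hc | hc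
      · rw [if_pos hc] at hnew
        simp only [mem_singleton] at hnew
        subst hnew
        refine ⟨hc.1, ?_⟩
        rw [pval_ins_self τ p, pval_ins_gt τ p (by omega) (by omega)]
        simpa using hc.2
      · rw [if_neg hc] at hnew; simp at hnew

lemma mem_rdesSet_range {m r : ℕ} {τ : Equiv.Perm (Fin m)} {i : ℕ} (h : i ∈ rdesSet r τ) :
    i < m - 1 := (mem_filter.mp h).1 |> mem_range.mp

lemma lost_imp_new {m r : ℕ} {τ : Equiv.Perm (Fin m)} {p : Fin (m+1)}
    (h : 1 ≤ (p : ℕ) ∧ (p : ℕ) - 1 ∈ rdesSet r τ) :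
    (p : ℕ) < m ∧ pval τ (p : ℕ) + r ≤ m := by
  obtain ⟨h1, h2⟩ := h
  have hr := mem_rdesSet_range h2
  have hd := (mem_filter.mp h2).2
  have : (p : ℕ) - 1 + 1 = (p : ℕ) := by omega
  rw [this] at hd
  have := pval_lt τ (show (p:ℕ) - 1 < m by omega)
  exact ⟨by omega, by omega⟩

lemma rdes_ins {m r : ℕ} (hr : 1 ≤ r) (τ : Equiv.Perm (Fin m)) (p : Fin (m+1)) :
    rdes r (ins τ p) + (if 1 ≤ (p : ℕ) ∧ (p : ℕ) - 1 ∈ rdesSet r τ then 1 else 0)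
      = rdes r τ + (if (p : ℕ) < m ∧ pval τ (p : ℕ) + r ≤ m then 1 else 0) := by
  classical
  rw [rdes, rdesSet_ins hr τ p]
  have hdisj : Disjoint
      (((rdesSet r τ).filter (fun i => i + 1 ≠ (p : ℕ))).image (fun i => if i < (p : ℕ) then i else i + 1))
      (if (p : ℕ) < m ∧ pval τ (p : ℕ) + r ≤ m then {(p : ℕ)} else ∅) := by
    split_ifs with hc
    · rw [disjoint_singleton_right]
      simp only [mem_image, mem_filter, not_exists, not_and]
      rintro j ⟨hj, hne⟩
      split_ifs with hlt <;> omega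
    · exact disjoint_empty_right _
  rw [card_union_of_disjoint hdisj]
  have hinj : Set.InjOn (fun i => if i < (p : ℕ) then i else i + 1)
      ((rdesSet r τ).filter (fun i => i + 1 ≠ (p : ℕ))) := by
    intro a _ b _ hab
    simp only at hab
    split_ifs at hab <;> omega
  rw [card_image_of_injOn hinj]
  have hsplit := card_filter_add_card_filter_not
    (s := rdesSet r τ) (p := fun i => i + 1 ≠ (p : ℕ))
  have hlostcard : ((rdesSet r τ).filter (fun i => ¬ (i + 1 ≠ (p : ℕ)))).card
      = (if 1 ≤ (p : ℕ) ∧ (p : ℕ) - 1 ∈ rdesSet r τ then 1 else 0) := by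
    split_ifs with hc
    · have : ((rdesSet r τ).filter (fun i => ¬ (i + 1 ≠ (p : ℕ)))) = {(p : ℕ) - 1} := by
        ext j
        simp only [mem_filter, not_not, mem_singleton]
        constructor
        · rintro ⟨_, hj⟩; omega
        · rintro rfl; exact ⟨hc.2, by omega⟩
      rw [this, card_singleton]
    · have : ((rdesSet r τ).filter (fun i => ¬ (i + 1 ≠ (p : ℕ)))) = ∅ := by
        ext j
        simp only [mem_filter, not_not, notMem_empty, iff_false, not_and]
        intro hj hj1
        exact hc ⟨by omega, by rwa [show (p:ℕ) - 1 = j by omega]⟩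
      rw [this, card_empty]
  have hnewcard : (if (p : ℕ) < m ∧ pval τ (p : ℕ) + r ≤ m then ({(p : ℕ)} : Finset ℕ) else ∅).card
      = (if (p : ℕ) < m ∧ pval τ (p : ℕ) + r ≤ m then 1 else 0) := by
    split_ifs <;> simp
  rw [hnewcard, rdes]
  omega

lemma card_new {m r : ℕ} (hr : 1 ≤ r) (hm : r ≤ m) (τ : Equiv.Perm (Fin m)) :
    ((univ : Finset (Fin (m+1))).filter (fun p : Fin (m+1) => (p : ℕ) < m ∧ pval τ (p : ℕ) + r ≤ m)).card
      = m - r + 1 := by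
  have h1 : ((univ : Finset (Fin (m+1))).filter (fun p : Fin (m+1) => (p : ℕ) < m ∧ pval τ (p : ℕ) + r ≤ m)).card
      = ((Finset.range (m - r + 1))).card := by
    refine card_bij' (fun (p : Fin (m+1)) _ => pval τ (p : ℕ))
      (fun v hv => (Fin.castSucc (τ.symm ⟨v, by have := mem_range.mp hv; omega⟩)))
      ?_ ?_ ?_ ?_
    · intro p hp
      have hp' := (mem_filter.mp hp).2
      rw [mem_range]
      omega
    · intro v hv
      have hv' := mem_range.mp hv
      rw [mem_filter]
      refine ⟨mem_univ _, ?_, ?_⟩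
      · simpa using (τ.symm ⟨v, by omega⟩).isLt
      · have h2 : pval τ ((Fin.castSucc (τ.symm ⟨v, by omega⟩) : Fin (m+1)) : ℕ) = v := by
          rw [pval, dif_pos (by simpa using (τ.symm ⟨v, by omega⟩).isLt)]
          simp
        rw [h2]; omega
    · intro p hp
      have hp' := (mem_filter.mp hp).2
      have e1 : ∀ h, (⟨pval τ (p:ℕ), h⟩ : Fin m) = τ ⟨(p:ℕ), hp'.1⟩ := by
        intro h
        apply Fin.ext
        simp [pval, hp'.1]
      rw [e1]
      apply Fin.ext
      simp
    · intro v hv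
      have hv' := mem_range.mp hv
      rw [pval, dif_pos (by simpa using (τ.symm ⟨v, by omega⟩).isLt)]
      simp
  rw [h1, card_range]

lemma card_lost {m r : ℕ} (τ : Equiv.Perm (Fin m)) :
    ((univ : Finset (Fin (m+1))).filter (fun p : Fin (m+1) => 1 ≤ (p : ℕ) ∧ (p : ℕ) - 1 ∈ rdesSet r τ)).card
      = rdes r τ := by
  rw [rdes]
  refine card_bij' (fun (p : Fin (m+1)) _ => (p : ℕ) - 1)
    (fun i hi => (⟨i + 1, by have := mem_rdesSet_range hi; omega⟩ : Fin (m+1)))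
    ?_ ?_ ?_ ?_
  · intro p hp; exact ((mem_filter.mp hp).2).2
  · intro i hi
    rw [mem_filter]
    exact ⟨mem_univ _, by simp, by simpa using hi⟩
  · intro p hp
    have hp' := (mem_filter.mp hp).2
    apply Fin.ext
    simp
    omega
  · intro i hi; simp

open Classical in
lemma count_ins {m r : ℕ} (hr : 1 ≤ r) (hm : r ≤ m) (τ : Equiv.Perm (Fin m)) (k : ℕ) :
    ((univ : Finset (Fin (m+1))).filter (fun p : Fin (m+1) => rdes r (ins τ p) = k)).card
      = (if rdes r τ = k then k + r else 0)
        + (if rdes r τ + 1 = k then m - r + 1 - rdes r τ else 0) := by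
  classical
  set d := rdes r τ with hd
  set L := fun p : Fin (m+1) => 1 ≤ (p : ℕ) ∧ (p : ℕ) - 1 ∈ rdesSet r τ with hL
  set N := fun p : Fin (m+1) => (p : ℕ) < m ∧ pval τ (p : ℕ) + r ≤ m with hN
  -- cardinality of the "raise" set
  have hX : ((univ : Finset (Fin (m+1))).filter (fun p => N p ∧ ¬ L p)).card + d = m - r + 1 := by
    have h1 : ((univ : Finset (Fin (m+1))).filter N).filter L
        = (univ : Finset (Fin (m+1))).filter L := by
      ext p
      simp only [mem_filter, mem_univ, true_and, filter_filter]
      exact ⟨fun h => h.2, fun h => ⟨lost_imp_new h, h⟩⟩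
    have h2 := card_filter_add_card_filter_not
      (s := (univ : Finset (Fin (m+1))).filter N) (p := L)
    rw [h1, card_lost] at h2
    have h3 : ((univ : Finset (Fin (m+1))).filter N).filter (fun p => ¬ L p)
        = (univ : Finset (Fin (m+1))).filter (fun p => N p ∧ ¬ L p) := by
      rw [filter_filter]
    rw [h3, card_new hr hm] at h2
    omega
  have hper : ∀ p : Fin (m+1), rdes r (ins τ p) + (if L p then 1 else 0)
      = d + (if N p then 1 else 0) := fun p => rdes_ins hr τ p
  by_cases h1 : d + 1 = k
  · -- raise case
    have hfe : (univ : Finset (Fin (m+1))).filter (fun p : Fin (m+1) => rdes r (ins τ p) = k)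
        = (univ : Finset (Fin (m+1))).filter (fun p => N p ∧ ¬ L p) := by
      ext p
      have := hper p
      simp only [mem_filter, mem_univ, true_and]
      constructor
      · intro hh
        by_cases hLp : L p
        · have h4 := lost_imp_new (hL ▸ hLp)
          rw [if_pos hLp, if_pos (show N p from h4)] at this
          exact absurd hh (by omega)
        · by_cases hNp : N p
          · exact ⟨hNp, hLp⟩
          · rw [if_neg hLp, if_neg hNp] at this
            exact absurd hh (by omega)
      · rintro ⟨hNp, hLp⟩
        rw [if_neg hLp, if_pos hNp] at this; omega
    rw [hfe]
    rw [if_neg (by omega), if_pos h1]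
    omega
  · by_cases h0 : d = k
    · -- keep case
      have hfe : (univ : Finset (Fin (m+1))).filter (fun p : Fin (m+1) => rdes r (ins τ p) = k)
          = (univ : Finset (Fin (m+1))).filter (fun p => ¬ (N p ∧ ¬ L p)) := by
        ext p
        have := hper p
        simp only [mem_filter, mem_univ, true_and]
        constructor
        · rintro hh ⟨hNp, hLp⟩
          rw [if_neg hLp, if_pos hNp] at this; omega
        · intro hh
          by_cases hLp : L p
          · have h4 := lost_imp_new (hL ▸ hLp)
            rw [if_pos hLp, if_pos (show N p from h4)] at this; omega
          · have hNp : ¬ N p := fun hNp => hh ⟨hNp, hLp⟩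
            rw [if_neg hLp, if_neg hNp] at this; omega
      rw [hfe]
      have h2 := card_filter_add_card_filter_not
        (s := (univ : Finset (Fin (m+1)))) (p := fun p => N p ∧ ¬ L p)
      rw [card_univ, Fintype.card_fin] at h2
      rw [if_pos h0, if_neg h1]
      omega
    · -- neither
      have hfe : (univ : Finset (Fin (m+1))).filter (fun p : Fin (m+1) => rdes r (ins τ p) = k)
          = ∅ := by
        ext p
        have := hper p
        simp only [mem_filter, mem_univ, true_and, notMem_empty, iff_false]
        intro hh
        by_cases hLp : L p
        · have h4 := lost_imp_new (hL ▸ hLp)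
          rw [if_pos hLp, if_pos (show N p from h4)] at this; omega
        · by_cases hNp : N p
          · rw [if_neg hLp, if_pos hNp] at this; omega
          · rw [if_neg hLp, if_neg hNp] at this; omega
      rw [hfe, if_neg h0, if_neg h1, card_empty]

lemma ins_injective {m : ℕ} :
    Function.Injective (fun x : Equiv.Perm (Fin m) × Fin (m+1) => ins x.1 x.2) := by
  rintro ⟨τ, p⟩ ⟨τ', p'⟩ h
  simp only at h
  have hpp : p = p' := by
    by_contra hne
    have hv : (p : ℕ) ≠ (p' : ℕ) := fun hh => hne (Fin.ext hh)
    have h1 : pval (ins τ p) (p : ℕ) = m := pval_ins_self τ p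
    have h2 : pval (ins τ' p') (p : ℕ) < m := by
      rcases lt_or_gt_of_ne hv with hlt | hgt
      · rw [pval_ins_lt τ' p' hlt]
        exact pval_lt τ' (lt_of_lt_of_le hlt (Nat.lt_succ_iff.mp p'.isLt))
      · rw [pval_ins_gt τ' p' hgt (Nat.lt_succ_iff.mp p.isLt)]
        exact pval_lt τ' (by have := Nat.lt_succ_iff.mp p.isLt; omega)
    rw [h] at h1
    omega
  subst hpp
  have hτ : τ = τ' := by
    apply Equiv.ext
    intro i
    apply Fin.ext
    have hvp : ∀ (τ₀ : Equiv.Perm (Fin m)) (i : Fin m), (τ₀ i : ℕ) = pval τ₀ (i : ℕ) := by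
      intro τ₀ i
      rw [pval, dif_pos i.isLt]
    rw [hvp, hvp]
    rcases lt_or_ge (i : ℕ) (p : ℕ) with hlt | hge
    · rw [← pval_ins_lt τ p hlt, ← pval_ins_lt τ' p hlt, h]
    · have h1 : (p : ℕ) < (i : ℕ) + 1 := by omega
      have h2 : (i : ℕ) + 1 ≤ m := i.isLt
      have e1 := pval_ins_gt τ p h1 h2
      have e2 := pval_ins_gt τ' p h1 h2
      simp only [Nat.add_sub_cancel] at e1 e2
      rw [← e1, ← e2, h]
  exact Prod.ext hτ rfl

lemma rEulerian_sum {m r : ℕ} (k : ℕ) :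
    rEulerian (m+1) k r = ∑ τ : Equiv.Perm (Fin m),
      ((univ : Finset (Fin (m+1))).filter (fun p : Fin (m+1) => rdes r (ins τ p) = k)).card := by
  classical
  have hcard : Fintype.card (Equiv.Perm (Fin m) × Fin (m+1))
      = Fintype.card (Equiv.Perm (Fin (m+1))) := by
    simp [Fintype.card_perm, Fintype.card_fin, Nat.factorial_succ]
    ring
  have hbij : Function.Bijective
      (fun x : Equiv.Perm (Fin m) × Fin (m+1) => ins x.1 x.2) :=
    (Fintype.bijective_iff_injective_and_card _).mpr ⟨ins_injective, hcard⟩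
  have h1 : rEulerian (m+1) k r =
      ((univ : Finset (Equiv.Perm (Fin m) × Fin (m+1))).filter
        (fun x => rdes r (ins x.1 x.2) = k)).card := by
    rw [rEulerian]
    exact (card_equiv (Equiv.ofBijective _ hbij) (by
      intro x
      simp [Equiv.ofBijective])).symm
  rw [h1, card_filter, Fintype.sum_prod_type]
  refine Finset.sum_congr rfl (fun τ _ => ?_)
  rw [card_filter]

lemma sum_ite_card {α : Type*} [Fintype α] [DecidableEq α] (P : α → Prop) [DecidablePred P] (c : ℕ) :
    (∑ a : α, if P a then c else 0)
      = c * ((univ : Finset α).filter P).card := by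
  rw [← Finset.sum_filter, Finset.sum_const, smul_eq_mul, mul_comm]

lemma rEulerian_rec_zero {m r : ℕ} (hr : 1 ≤ r) (hm : r ≤ m) :
    rEulerian (m+1) 0 r = r * rEulerian m 0 r := by
  classical
  rw [rEulerian_sum 0]
  have h1 : ∀ τ : Equiv.Perm (Fin m),
      ((univ : Finset (Fin (m+1))).filter (fun p : Fin (m+1) => rdes r (ins τ p) = 0)).card
        = if rdes r τ = 0 then r else 0 := by
    intro τ
    rw [count_ins hr hm τ 0]
    simp
  rw [Finset.sum_congr rfl (fun τ _ => h1 τ), sum_ite_card]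
  rfl

lemma rEulerian_rec_succ {m r : ℕ} (hr : 1 ≤ r) (hm : r ≤ m) (k : ℕ) :
    rEulerian (m+1) (k+1) r
      = (k+1+r) * rEulerian m (k+1) r + (m-r+1-k) * rEulerian m k r := by
  classical
  rw [rEulerian_sum (k+1)]
  have h1 : ∀ τ : Equiv.Perm (Fin m),
      ((univ : Finset (Fin (m+1))).filter (fun p : Fin (m+1) => rdes r (ins τ p) = k+1)).card
        = (if rdes r τ = k+1 then k+1+r else 0) + (if rdes r τ = k then m-r+1-k else 0) := by
    intro τ
    rw [count_ins hr hm τ (k+1)]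
    congr 1
    by_cases h : rdes r τ = k
    · rw [if_pos (by omega), if_pos h, h]
    · rw [if_neg (by omega), if_neg h]
  rw [Finset.sum_congr rfl (fun τ _ => h1 τ), Finset.sum_add_distrib,
    sum_ite_card, sum_ite_card]
  rfl

lemma stE_eq_zero {s t : ℕ} : ∀ {n k : ℕ}, n < k → stE s t n k = 0 := by
  intro n
  induction n with
  | zero => intro k hk; rw [stE]; rw [if_neg (by omega)]
  | succ n ih =>
    intro k hk
    match k, hk with
    | k + 1, hk =>
      rw [stE, ih (by omega), ih (by omega)]
      ring

lemma rdes_bound {M r : ℕ} (hr : 1 ≤ r) (hM : r ≤ M) (σ : Equiv.Perm (Fin M)) :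
    rdes r σ ≤ M - r := by
  have hsub : rdesSet r σ ⊆ (Finset.range M).filter (fun i => r ≤ pval σ i) := by
    intro i hi
    have h1 := mem_rdesSet_range hi
    have h2 := (mem_filter.mp hi).2
    rw [mem_filter, mem_range]
    exact ⟨by omega, by omega⟩
  have hcard : ((Finset.range M).filter (fun i => r ≤ pval σ i)).card = M - r := by
    have h2 : ((Finset.range M).filter (fun i => r ≤ pval σ i)).card
        = (Finset.Ico r M).card := by
      refine card_bij' (fun i _ => pval σ i)
        (fun v hv => ((σ.symm ⟨v, (mem_Ico.mp hv).2⟩ : Fin M) : ℕ))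
        ?_ ?_ ?_ ?_
      · intro i hi
        have h3 := mem_filter.mp hi
        rw [mem_Ico]
        exact ⟨h3.2, pval_lt σ (mem_range.mp h3.1)⟩
      · intro v hv
        rw [mem_filter, mem_range]
        constructor
        · exact (σ.symm ⟨v, (mem_Ico.mp hv).2⟩).isLt
        · rw [pval, dif_pos (σ.symm ⟨v, (mem_Ico.mp hv).2⟩).isLt]
          simp
          exact (mem_Ico.mp hv).1
      · intro i hi
        have h3 := mem_filter.mp hi
        have h4 := mem_range.mp h3.1
        have e1 : ∀ h, (⟨pval σ i, h⟩ : Fin M) = σ ⟨i, h4⟩ := by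
          intro h
          apply Fin.ext
          simp [pval, h4]
        rw [e1]
        simp
      · intro v hv
        rw [pval, dif_pos (σ.symm ⟨v, (mem_Ico.mp hv).2⟩).isLt]
        simp
    rw [h2, Nat.card_Ico]
  calc rdes r σ ≤ ((Finset.range M).filter (fun i => r ≤ pval σ i)).card :=
        card_le_card hsub
    _ = M - r := hcard

lemma rEulerian_eq_zero {M k r : ℕ} (hr : 1 ≤ r) (hM : r ≤ M) (hk : M - r < k) :
    rEulerian M k r = 0 := by
  rw [rEulerian]
  rw [filter_false_of_mem, card_empty]
  intro σ _
  have := rdes_bound hr hM σ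
  omega

lemma rdes_base {r : ℕ} (hr : 1 ≤ r) (σ : Equiv.Perm (Fin r)) : rdes r σ = 0 := by
  rw [rdes, rdesSet, filter_false_of_mem, card_empty]
  intro i hi
  have h1 : pval σ i < r := by
    rw [pval]
    split_ifs with h
    · exact (σ ⟨i, h⟩).isLt
    · omega
  omega

lemma rEulerian_base {r : ℕ} (hr : 1 ≤ r) : rEulerian r 0 r = Nat.factorial r := by
  rw [rEulerian, filter_true_of_mem (fun σ _ => rdes_base hr σ), card_univ,
    Fintype.card_perm, Fintype.card_fin]

theorem stE_r_one_eq_rEulerian (r n k : ℕ) (hr : 1 ≤ r) (hk : k ≤ n) :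
    Nat.factorial r * stE r 1 n k = rEulerian (n + r) k r := by
  induction n generalizing k with
  | zero =>
    interval_cases k
    rw [stE, if_pos rfl, mul_one, Nat.zero_add, rEulerian_base hr]
  | succ n ih =>
    have hrm : r ≤ n + r := by omega
    have hnr : n + 1 + r = (n + r) + 1 := by omega
    rw [hnr]
    match k, hk with
    | 0, _ =>
      rw [stE, rEulerian_rec_zero hr hrm, ← ih 0 (by omega)]
      ring
    | k + 1, hk =>
      have hk' : k ≤ n := by omega
      rw [stE, rEulerian_rec_succ hr hrm k]
      have h2 : n + r - r + 1 - k = n - k + 1 := by omega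
      rw [h2]
      have h3 : Nat.factorial r * stE r 1 n (k+1) = rEulerian (n + r) (k+1) r := by
        rcases Nat.lt_or_ge k n with h | h
        · exact ih (k+1) (by omega)
        · have hkn : k = n := by omega
          subst hkn
          rw [stE_eq_zero (by omega), mul_zero,
            rEulerian_eq_zero hr hrm (by omega)]
      rw [Nat.mul_add, ← h3, ← ih k hk']
      ring
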